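/- Let A, B be finite-dimensional C*-algebras each equipped with a faithful positive linear functional, regarded as Frobenius algebras in the category of finite-dimensional Hilbert spaces, and suppose both are special (m ∘ m† = id). Then any counital coalgebra *-cohomomorphism f: A → B (i.e., a linear map satisfying m_B† ∘ f = (f ⊗ f) ∘ m_A†, u_B† ∘ f = u_A†, and compatibility with the involutions) is completely positive and preserves the functionals; in particular f is a channel. -/

import Mathlib

open scoped TensorProduct

/-- The "bra" pairing `⟪c ⊗ d, -⟫` on `A ⊗ A` induced by `⟪x, y⟫ = φ(x* y)`. -/
noncomputable def braket {A : Type*} [Ring A] [Algebra ℂ A] [StarRing A]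
    (φ : A →ₗ[ℂ] ℂ) (c d : A) : A ⊗[ℂ] A →ₗ[ℂ] ℂ :=
  TensorProduct.lift <| (LinearMap.mul ℂ ℂ).compl₁₂
    (φ ∘ₗ LinearMap.mulLeft ℂ (star c)) (φ ∘ₗ LinearMap.mulLeft ℂ (star d))

/-- `δ` is the Hermitian adjoint `m†` of multiplication with respect to `⟪x,y⟫ = φ(x* y)`. -/
def IsComulAdjoint {A : Type*} [Ring A] [Algebra ℂ A] [StarRing A]
    (φ : A →ₗ[ℂ] ℂ) (δ : A →ₗ[ℂ] A ⊗[ℂ] A) : Prop :=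
  ∀ a c d : A, braket φ c d (δ a) = φ (star (c * d) * a)

/-- A linear map `f : A → B` between C*-algebras is completely positive: for every `k`,
every positive `k × k` matrix over `A` (i.e. one of the form `N* N`) is sent, entrywise,
to a positive `k × k` matrix over `B`. -/
def IsCompletelyPositive {A B : Type*} [Ring A] [Algebra ℂ A] [StarRing A]
    [Ring B] [Algebra ℂ B] [StarRing B] (f : A →ₗ[ℂ] B) : Prop :=
  ∀ (k : ℕ) (M : Matrix (Fin k) (Fin k) A), (∃ N : Matrix (Fin k) (Fin k) A, M = star N * N) →
    ∃ P : Matrix (Fin k) (Fin k) B, M.map f = star P * P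

section Aux

variable {C : Type*} [Ring C] [Algebra ℂ C] [StarRing C] [StarModule ℂ C]

/-- Polarization: a functional with `φ(x*x)` real is hermitian. -/
lemma herm_aux (Φ : C →ₗ[ℂ] ℂ)
    (hpos : ∀ x : C, 0 ≤ (Φ (star x * x)).re ∧ (Φ (star x * x)).im = 0)
    (x y : C) : Φ (star y * x) = (starRingEnd ℂ) (Φ (star x * y)) := by
  have h1 : (Φ (star (x + y) * (x + y))).im = 0 := (hpos _).2
  have h2 : (Φ (star (x + Complex.I • y) * (x + Complex.I • y))).im = 0 := (hpos _).2
  have e1 : star (x + y) * (x + y)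
      = star x * x + (star x * y + (star y * x + star y * y)) := by
    rw [star_add]; noncomm_ring
  have e2 : star (x + Complex.I • y) * (x + Complex.I • y)
      = star x * x + (Complex.I • (star x * y) +
        ((- Complex.I) • (star y * x) + star y * y)) := by
    simp only [star_add, star_smul, Complex.star_def, Complex.conj_I, add_mul, mul_add,
      smul_mul_assoc, mul_smul_comm, smul_smul]
    have hI : -Complex.I ^ 2 = 1 := by
      rw [Complex.I_sq]; norm_num
    match_scalars <;> simp [Complex.I_sq] <;> ring
  rw [e1] at h1
  rw [e2] at h2
  simp only [map_add, map_smul] at h1 h2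
  have hx := (hpos x).2
  have hy := (hpos y).2
  set av := Φ (star x * y) with hav
  set bv := Φ (star y * x) with hbv
  have h1' : av.im + bv.im = 0 := by
    simp only [Complex.add_im, hx, hy] at h1
    linarith
  have h2' : av.re - bv.re = 0 := by
    simp only [Complex.add_im, smul_eq_mul, Complex.mul_im, Complex.neg_re,
      Complex.neg_im, Complex.I_re, Complex.I_im, hx, hy, neg_zero, zero_mul, one_mul,
      neg_mul, add_zero, zero_add, mul_zero] at h2
    linarith
  apply Complex.ext
  · simp only [Complex.conj_re]
    linarith
  · simp only [Complex.conj_im]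
    linarith

lemma phi_star_aux (Φ : C →ₗ[ℂ] ℂ)
    (hpos : ∀ x : C, 0 ≤ (Φ (star x * x)).re ∧ (Φ (star x * x)).im = 0)
    (u : C) : Φ (star u) = (starRingEnd ℂ) (Φ u) := by
  simpa using herm_aux Φ hpos (1 : C) u

lemma braket_tmul (Φ : C →ₗ[ℂ] ℂ) (c d x y : C) :
    braket Φ c d (x ⊗ₜ[ℂ] y) = Φ (star c * x) * Φ (star d * y) := by
  simp [braket]

variable [FiniteDimensional ℂ C]

lemma dual_surj (Φ : C →ₗ[ℂ] ℂ)
    (hfaith : ∀ x : C, x ≠ 0 → Φ (star x * x) ≠ 0) :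
    Function.Surjective ((LinearMap.mul ℂ C).compr₂ Φ) := by
  have hinj : Function.Injective ((LinearMap.mul ℂ C).compr₂ Φ) := by
    rw [injective_iff_map_eq_zero]
    intro c hc
    by_contra h
    refine hfaith (star c) (star_ne_zero.mpr h) ?_
    have := DFunLike.congr_fun hc (star c)
    simpa using this
  exact (LinearMap.injective_iff_surjective_of_finrank_eq_finrank
    Subspace.dual_finrank_eq.symm).mp hinj

set_option synthInstance.maxHeartbeats 1000000 in
lemma braket_nondeg (Φ : C →ₗ[ℂ] ℂ)
    (hfaith : ∀ x : C, x ≠ 0 → Φ (star x * x) ≠ 0)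
    (t : C ⊗[ℂ] C) (ht : ∀ c d, braket Φ c d t = 0) : t = 0 := by
  rw [← Module.forall_dual_apply_eq_zero_iff ℂ t]
  intro F
  obtain ⟨G, rfl⟩ := (TensorProduct.dualDistribEquiv ℂ C C).surjective F
  induction G using TensorProduct.induction_on with
  | zero => simp only [map_zero, LinearMap.zero_apply]
  | tmul g h =>
    obtain ⟨c₀, rfl⟩ := dual_surj Φ hfaith g
    obtain ⟨d₀, rfl⟩ := dual_surj Φ hfaith h
    have hdd : (TensorProduct.dualDistribEquiv ℂ C C)
        (((LinearMap.mul ℂ C).compr₂ Φ) c₀ ⊗ₜ[ℂ] ((LinearMap.mul ℂ C).compr₂ Φ) d₀)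
        = braket Φ (star c₀) (star d₀) := by
      apply TensorProduct.ext'
      intro x y
      have : (TensorProduct.dualDistribEquiv ℂ C C)
          (((LinearMap.mul ℂ C).compr₂ Φ) c₀ ⊗ₜ[ℂ] ((LinearMap.mul ℂ C).compr₂ Φ) d₀)
          = TensorProduct.dualDistrib ℂ C C
          (((LinearMap.mul ℂ C).compr₂ Φ) c₀ ⊗ₜ[ℂ] ((LinearMap.mul ℂ C).compr₂ Φ) d₀) := rfl
      rw [this, TensorProduct.dualDistrib_apply, braket_tmul]
      simp
    rw [hdd]
    exact ht _ _
  | add u v hu hv =>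
    rw [map_add, LinearMap.add_apply, hu, hv, add_zero]

lemma comul_mulLeft (Φ : C →ₗ[ℂ] ℂ)
    (hfaith : ∀ x : C, x ≠ 0 → Φ (star x * x) ≠ 0)
    (δ : C →ₗ[ℂ] C ⊗[ℂ] C) (hδ : IsComulAdjoint Φ δ) (a y : C) :
    δ (a * y) = (TensorProduct.map (LinearMap.mulLeft ℂ a) LinearMap.id) (δ y) := by
  rw [← sub_eq_zero]
  apply braket_nondeg Φ hfaith
  intro c d
  rw [map_sub, hδ (a * y) c d]
  have h2 : braket Φ c d ((TensorProduct.map (LinearMap.mulLeft ℂ a) LinearMap.id) (δ y))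
      = braket Φ (star a * c) d (δ y) := by
    have key : (braket Φ c d) ∘ₗ (TensorProduct.map (LinearMap.mulLeft ℂ a) LinearMap.id)
        = braket Φ (star a * c) d := by
      apply TensorProduct.ext'
      intro x z
      simp [braket_tmul, star_mul, star_star, mul_assoc]
    exact DFunLike.congr_fun key (δ y)
  rw [h2, hδ y (star a * c) d, sub_eq_zero]
  congr 1
  simp [star_mul, star_star, mul_assoc]

/-- Existence of a "Parseval family" for a faithful positive functional. -/
lemma key_basis (Φ : C →ₗ[ℂ] ℂ)
    (hpos : ∀ x : C, 0 ≤ (Φ (star x * x)).re ∧ (Φ (star x * x)).im = 0)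
    (hfaith : ∀ x : C, x ≠ 0 → Φ (star x * x) ≠ 0) :
    ∃ (n : ℕ) (b : Fin n → C), ∀ c d y : C,
      (∑ s, Φ (star c * b s) * Φ (star d * (star (b s) * y))) = Φ (star (c * d) * y) := by
  letI core : InnerProductSpace.Core ℂ C :=
    { inner := fun u v => Φ (star u * v)
      conj_inner_symm := fun u v => by
        simpa using (herm_aux Φ hpos v u).symm
      re_inner_nonneg := fun u => (hpos u).1
      definite := fun u hu => by
        by_contra h
        exact hfaith u h hu
      add_left := fun u v w => by simp [star_add, add_mul]
      smul_left := fun u v r => by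
        simp [star_smul, smul_mul_assoc, Complex.star_def] }
  letI : NormedAddCommGroup C := core.toNormedAddCommGroup
  letI : InnerProductSpace ℂ C := InnerProductSpace.ofCore core.toCore
  have hinner : ∀ u v : C, (inner ℂ u v : ℂ) = Φ (star u * v) := fun _ _ => rfl
  set n := Module.finrank ℂ C with hn
  let bb : OrthonormalBasis (Fin n) ℂ C := stdOrthonormalBasis ℂ C
  refine ⟨n, fun s => bb s, ?_⟩
  intro c d y
  let ψ : C →ₗ[ℂ] ℂ := Φ ∘ₗ (LinearMap.mulRight ℂ d) ∘ₗ (LinearMap.mulLeft ℂ (star y))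
  let r : C := (InnerProductSpace.toDual ℂ C).symm (LinearMap.toContinuousLinearMap ψ)
  have hr : ∀ z : C, (inner ℂ r z : ℂ) = Φ ((star y * z) * d) := by
    intro z
    have h := InnerProductSpace.toDual_symm_apply
      (𝕜 := ℂ) (E := C) (x := z) (y := LinearMap.toContinuousLinearMap ψ)
    rw [h]
    simp only [LinearMap.coe_toContinuousLinearMap', ψ, LinearMap.comp_apply,
      LinearMap.mulRight_apply, LinearMap.mulLeft_apply]
  have h1 : ∀ s : Fin n, Φ (star d * (star (bb s) * y)) = (inner ℂ (bb s) r : ℂ) := by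
    intro s
    have e1 : star d * (star (bb s) * y) = star ((star y * bb s) * d) := by
      simp [star_mul, star_star, mul_assoc]
    rw [e1, phi_star_aux Φ hpos, ← hr (bb s), ← inner_conj_symm (bb s) r]
  have h2 : ∀ s : Fin n, Φ (star c * bb s) = (inner ℂ c (bb s) : ℂ) := fun s => rfl
  calc (∑ s, Φ (star c * bb s) * Φ (star d * (star (bb s) * y)))
      = ∑ s, (inner ℂ c (bb s) : ℂ) * (inner ℂ (bb s) r : ℂ) := by
        refine Finset.sum_congr rfl fun s _ => ?_
        rw [h1 s, h2 s]
    _ = (inner ℂ c r : ℂ) := bb.sum_inner_mul_inner c r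
    _ = Φ (star (c * d) * y) := by
        rw [← inner_conj_symm c r, hr c, ← phi_star_aux Φ hpos]
        congr 1
        simp [star_mul, star_star, mul_assoc]

/-- Any finite sum of elements `xᵢ* xᵢ` in a finite-dimensional `⋆`-algebra with a
faithful positive functional has the form `p* p`. -/
lemma exists_sqrt_sum (Φ : C →ₗ[ℂ] ℂ)
    (hpos : ∀ x : C, 0 ≤ (Φ (star x * x)).re ∧ (Φ (star x * x)).im = 0)
    (hfaith : ∀ x : C, x ≠ 0 → Φ (star x * x) ≠ 0)
    {ι : Type*} [Fintype ι] (x : ι → C) :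
    ∃ p : C, ∑ i, star (x i) * x i = star p * p := by
  classical
  letI core : InnerProductSpace.Core ℂ C :=
    { inner := fun u v => Φ (star u * v)
      conj_inner_symm := fun u v => by
        simpa using (herm_aux Φ hpos v u).symm
      re_inner_nonneg := fun u => (hpos u).1
      definite := fun u hu => by
        by_contra h
        exact hfaith u h hu
      add_left := fun u v w => by simp [star_add, add_mul]
      smul_left := fun u v r => by
        simp [star_smul, smul_mul_assoc, Complex.star_def] }
  letI : NormedAddCommGroup C := core.toNormedAddCommGroup
  letI : InnerProductSpace ℂ C := InnerProductSpace.ofCore core.toCore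
  set a : C := ∑ i, star (x i) * x i with ha
  have hstara : star a = a := by
    rw [ha, star_sum]
    refine Finset.sum_congr rfl fun i _ => ?_
    rw [star_mul, star_star]
  have hpos' : ∀ v : C, 0 ≤ (Φ (star v * (a * v))).re ∧ (Φ (star v * (a * v))).im = 0 := by
    intro v
    have hv : star v * (a * v) = ∑ i, star (x i * v) * (x i * v) := by
      rw [ha, Finset.sum_mul, Finset.mul_sum]
      refine Finset.sum_congr rfl fun i _ => ?_
      rw [star_mul, mul_assoc, mul_assoc]
    rw [hv, map_sum]
    constructor
    · rw [Complex.re_sum]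
      exact Finset.sum_nonneg fun i _ => (hpos _).1
    · rw [Complex.im_sum]
      exact Finset.sum_eq_zero fun i _ => (hpos _).2
  set S : Module.End ℂ C := Algebra.lmul ℂ C a with hS
  have hsymS : S.IsSymmetric := by
    intro u v
    show Φ (star (a * u) * v) = Φ (star u * (a * v))
    rw [star_mul, hstara, mul_assoc]
  have hfr : Module.finrank ℂ C = Module.finrank ℂ C := rfl
  set bb := hsymS.eigenvectorBasis hfr with hbb
  set μ := hsymS.eigenvalues hfr with hμdef
  have happ : ∀ i, S (bb i) = (μ i : ℂ) • bb i := fun i =>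
    hsymS.apply_eigenvectorBasis hfr i
  have hval : ∀ i, ((μ i : ℝ) : ℂ) = Φ (star (bb i) * (a * bb i)) := by
    intro i
    have h2 : Φ (star (bb i) * (a * bb i)) = (inner ℂ (bb i) (S (bb i)) : ℂ) := rfl
    have h3 : (inner ℂ (bb i) (bb i) : ℂ) = 1 := by
      have horth := bb.orthonormal
      rw [orthonormal_iff_ite] at horth
      simpa using horth i i
    rw [h2, happ i, inner_smul_right, h3, mul_one]
  have hμ : ∀ i, 0 ≤ μ i := by
    intro i
    have h0 := (hpos' (bb i)).1
    rw [← hval i] at h0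
    simpa using h0
  set q : Polynomial ℝ :=
    Lagrange.interpolate (Finset.image μ Finset.univ) id Real.sqrt with hq
  have heval : ∀ i, q.eval (μ i) = Real.sqrt (μ i) := by
    intro i
    have := Lagrange.eval_interpolate_at_node (v := id) (r := Real.sqrt)
      (s := Finset.image μ Finset.univ) (Set.injOn_id _)
      (Finset.mem_image_of_mem μ (Finset.mem_univ i))
    rw [hq]
    simpa using this
  set Q : Polynomial ℂ := q.map (algebraMap ℝ ℂ) with hQ
  set p : C := Polynomial.aeval a Q with hp
  have hpstar : star p = p := by
    rw [hp, Polynomial.aeval_eq_sum_range, star_sum]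
    refine Finset.sum_congr rfl fun i _ => ?_
    rw [star_smul, star_pow, hstara]
    congr 1
    rw [hQ, Polynomial.coeff_map]
    simp [Complex.star_def, Complex.conj_ofReal]
  have haeval : ∀ i, (Polynomial.aeval S Q) (bb i) = ((Real.sqrt (μ i) : ℝ) : ℂ) • bb i := by
    intro i
    have hev : S.HasEigenvector ((μ i : ℝ) : ℂ) (bb i) :=
      hsymS.hasEigenvector_eigenvectorBasis hfr i
    rw [Module.End.aeval_apply_of_hasEigenvector hev]
    congr 1
    have hcoe : ((μ i : ℝ) : ℂ) = algebraMap ℝ ℂ (μ i) := rfl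
    rw [hQ, Polynomial.eval_map, hcoe, Polynomial.eval₂_at_apply, heval i]
    rfl
  have hSS : (Polynomial.aeval S Q) * (Polynomial.aeval S Q) = S := by
    apply bb.toBasis.ext
    intro i
    rw [Module.End.mul_apply]
    simp only [OrthonormalBasis.coe_toBasis]
    rw [haeval i, map_smul, haeval i, smul_smul, happ i]
    congr 1
    rw [← Complex.ofReal_mul, Real.mul_self_sqrt (hμ i)]
  have hlm : Algebra.lmul ℂ C (p * p) = Algebra.lmul ℂ C a := by
    rw [map_mul]
    have hLp : Algebra.lmul ℂ C p = Polynomial.aeval S Q := by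
      rw [hp, ← Polynomial.aeval_algHom_apply]
    rw [hLp, hSS]
  have hppa : p * p = a := Algebra.lmul_injective hlm
  exact ⟨p, by rw [hpstar, hppa]⟩

end Aux

/-- Let `A`, `B` be finite-dimensional C*-algebras with faithful positive
functionals, viewed as *special* Frobenius algebras in f.d. Hilbert spaces (`m ∘ m† = id`).
Any counital coalgebra `*`-cohomomorphism `f : A → B` (intertwining the comultiplications
`m†`, preserving the counits `u† = φ`, and compatible with the involutions) is completely
positive and functional-preserving; in particular `f` is a channel. -/
theorem star_cohomomorphism_is_channel
    {A : Type*} [NormedRing A] [StarRing A] [CStarRing A]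
    [NormedAlgebra ℂ A] [StarModule ℂ A] [FiniteDimensional ℂ A]
    {B : Type*} [NormedRing B] [StarRing B] [CStarRing B]
    [NormedAlgebra ℂ B] [StarModule ℂ B] [FiniteDimensional ℂ B]
    (φA : A →ₗ[ℂ] ℂ) (φB : B →ₗ[ℂ] ℂ)
    (hposA : ∀ x : A, 0 ≤ (φA (star x * x)).re ∧ (φA (star x * x)).im = 0)
    (hfaithA : ∀ x : A, x ≠ 0 → φA (star x * x) ≠ 0)
    (hposB : ∀ x : B, 0 ≤ (φB (star x * x)).re ∧ (φB (star x * x)).im = 0)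
    (hfaithB : ∀ x : B, x ≠ 0 → φB (star x * x) ≠ 0)
    (δA : A →ₗ[ℂ] A ⊗[ℂ] A) (hδA : IsComulAdjoint φA δA)
    (δB : B →ₗ[ℂ] B ⊗[ℂ] B) (hδB : IsComulAdjoint φB δB)
    (hspecA : (LinearMap.mul' ℂ A) ∘ₗ δA = LinearMap.id)
    (hspecB : (LinearMap.mul' ℂ B) ∘ₗ δB = LinearMap.id)
    (f : A →ₗ[ℂ] B)
    (hcomul : (TensorProduct.map f f) ∘ₗ δA = δB ∘ₗ f)
    (hcounit : φB ∘ₗ f = φA)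
    (hstar : ∀ a : A, f (star a) = star (f a)) :
    IsCompletelyPositive f ∧ φB ∘ₗ f = φA := by
  classical
  refine ⟨?_, hcounit⟩
  rintro k M ⟨N, rfl⟩
  obtain ⟨n, b, hb⟩ := key_basis φA hposA hfaithA
  have hδform : ∀ y : A, δA y = ∑ s, b s ⊗ₜ[ℂ] (star (b s) * y) := by
    intro y
    rw [← sub_eq_zero]
    apply braket_nondeg φA hfaithA
    intro c d
    rw [map_sub, hδA y c d, map_sum]
    simp_rw [braket_tmul]
    rw [hb c d y, sub_self]
  have hf : ∀ x y : A,
      f (star x * y) = ∑ s, star (f (star (b s) * x)) * f (star (b s) * y) := by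
    intro x y
    have h0 : (LinearMap.mul' ℂ B) (δB (f (star x * y))) = f (star x * y) := by
      have := DFunLike.congr_fun hspecB (f (star x * y))
      simpa using this
    have h1 : δB (f (star x * y)) = (TensorProduct.map f f) (δA (star x * y)) :=
      (DFunLike.congr_fun hcomul (star x * y)).symm
    rw [← h0, h1, comul_mulLeft φA hfaithA δA hδA (star x) y, hδform y,
      map_sum, map_sum, map_sum]
    refine Finset.sum_congr rfl fun s _ => ?_
    rw [TensorProduct.map_tmul, TensorProduct.map_tmul, LinearMap.mul'_apply]
    simp only [LinearMap.mulLeft_apply, LinearMap.id_apply]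
    rw [show star x * b s = star (star (b s) * x) by rw [star_mul, star_star], hstar]
  by_cases hk : k = 0
  · subst hk
    refine ⟨0, ?_⟩
    ext i j
    exact i.elim0
  · have hk0 : 0 < k := Nat.pos_of_ne_zero hk
    let r₀ : Fin k := ⟨0, hk0⟩
    let X : Fin k × Fin n → Matrix (Fin k) (Fin k) B := fun pr =>
      Matrix.of fun r j => if r = r₀ then f (star (b pr.2) * N pr.1 j) else 0
    have hX : ∀ pr i j, (star (X pr) * X pr) i j
        = star (f (star (b pr.2) * N pr.1 i)) * f (star (b pr.2) * N pr.1 j) := by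
      intro pr i j
      rw [Matrix.mul_apply]
      rw [Finset.sum_eq_single r₀]
      · simp [X, Matrix.star_apply]
      · intro r _ hr
        simp [X, Matrix.star_apply, hr]
      · intro h
        exact absurd (Finset.mem_univ r₀) h
    have hMf : (star N * N).map f = ∑ pr : Fin k × Fin n, star (X pr) * X pr := by
      ext i j
      rw [Matrix.map_apply, Matrix.mul_apply]
      have : (∑ r, (star N) i r * N r j) = ∑ r, star (N r i) * N r j := by
        refine Finset.sum_congr rfl fun r _ => ?_
        rw [Matrix.star_apply]
      rw [this, map_sum]
      have hterm : ∀ r, f (star (N r i) * N r j)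
          = ∑ s, star (f (star (b s) * N r i)) * f (star (b s) * N r j) := fun r =>
        hf (N r i) (N r j)
      rw [Finset.sum_congr rfl fun r _ => hterm r]
      rw [Matrix.sum_apply, Fintype.sum_prod_type]
      refine Finset.sum_congr rfl fun r _ => ?_
      refine Finset.sum_congr rfl fun s _ => ?_
      exact (hX (r, s) i j).symm
    set ΦC : Matrix (Fin k) (Fin k) B →ₗ[ℂ] ℂ :=
      φB ∘ₗ Matrix.traceLinearMap (Fin k) ℂ B with hΦC
    have htr : ∀ T : Matrix (Fin k) (Fin k) B,
        ΦC (star T * T) = ∑ i, ∑ j, φB (star (T j i) * T j i) := by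
      intro T
      rw [hΦC]
      simp only [LinearMap.comp_apply, Matrix.traceLinearMap_apply, Matrix.trace,
        Matrix.diag_apply, Matrix.mul_apply, map_sum]
      refine Finset.sum_congr rfl fun i _ => ?_
      refine Finset.sum_congr rfl fun j _ => ?_
      rw [Matrix.star_apply]
    have hposC : ∀ T : Matrix (Fin k) (Fin k) B,
        0 ≤ (ΦC (star T * T)).re ∧ (ΦC (star T * T)).im = 0 := by
      intro T
      rw [htr T]
      constructor
      · rw [Complex.re_sum]
        refine Finset.sum_nonneg fun i _ => ?_
        rw [Complex.re_sum]
        exact Finset.sum_nonneg fun j _ => (hposB _).1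
      · rw [Complex.im_sum]
        refine Finset.sum_eq_zero fun i _ => ?_
        rw [Complex.im_sum]
        exact Finset.sum_eq_zero fun j _ => (hposB _).2
    have hfaithC : ∀ T : Matrix (Fin k) (Fin k) B, T ≠ 0 → ΦC (star T * T) ≠ 0 := by
      intro T hT
      obtain ⟨a0, b0, hab⟩ : ∃ a0 b0, T a0 b0 ≠ 0 := by
        by_contra h
        push_neg at h
        exact hT (by ext i j; simpa using h i j)
      have hterm : 0 < (φB (star (T a0 b0) * T a0 b0)).re := by
        rcases lt_or_eq_of_le (hposB (T a0 b0)).1 with h | h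
        · exact h
        · exfalso
          apply hfaithB (T a0 b0) hab
          apply Complex.ext
          · exact h.symm
          · exact (hposB (T a0 b0)).2
      have hre : 0 < (ΦC (star T * T)).re := by
        rw [htr T, Complex.re_sum]
        refine Finset.sum_pos' (fun i _ => ?_) ⟨b0, Finset.mem_univ b0, ?_⟩
        · rw [Complex.re_sum]
          exact Finset.sum_nonneg fun j _ => (hposB _).1
        · rw [Complex.re_sum]
          refine Finset.sum_pos' (fun j _ => (hposB _).1) ⟨a0, Finset.mem_univ a0, hterm⟩
      intro h
      rw [h] at hre
      simp at hre
    obtain ⟨p, hp⟩ := exists_sqrt_sum ΦC hposC hfaithC X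
    exact ⟨p, by rw [hMf, hp]⟩
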